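/- Let L : L²([0,1]) → L²([0,1]) be a compact, integral-preserving bounded linear operator satisfying the mixing condition (A1). Then Id − L restricted to V is a bijection of V onto V with bounded inverse: for every g ∈ V there exists a unique h ∈ V with h − L h = g, and there exists M ≥ 0 such that ‖h‖₂ ≤ M ‖g‖₂ for every such pair (g, h). -/

import Mathlib

open MeasureTheory Filter Metric

set_option maxHeartbeats 1000000

/-- Lebesgue measure restricted to the unit interval `[0,1]`. -/
noncomputable def μ01 : Measure ℝ := volume.restrict (Set.Icc (0 : ℝ) 1)

instance : IsFiniteMeasure μ01 := by
  constructor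
  simp [μ01, Real.volume_Icc]

-- key analytic lemma: compact + orbits → 0 implies some power has norm < 1
lemma exists_pow_norm_lt {E : Type*} [NormedAddCommGroup E] [NormedSpace ℝ E]
    [CompleteSpace E] (T : E →L[ℝ] E) (hc : IsCompactOperator T)
    (h0 : ∀ x : E, Tendsto (fun n : ℕ => ‖(T ^ n) x‖) atTop (nhds 0)) :
    ∃ N : ℕ, ‖T ^ N‖ < 1 := by
  obtain ⟨M, hM⟩ := banach_steinhaus (g := fun n : ℕ => T ^ n)
    (fun x => by
      obtain ⟨C, hC⟩ := ((h0 x).bddAbove_range).imp (fun C hC => hC)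
      exact ⟨C, fun n => hC ⟨n, rfl⟩⟩)
  set M₁ : ℝ := max M 1 with hM₁def
  have hM₁pos : 0 < M₁ := lt_of_lt_of_le one_pos (le_max_right _ _)
  have hM₁ : ∀ n : ℕ, ‖T ^ n‖ ≤ M₁ := fun n => (hM n).trans (le_max_left _ _)
  -- compact set containing image of closed unit ball
  have hCcomp : IsCompact (closure (⇑T '' closedBall (0:E) 1)) :=
    IsCompactOperator.isCompact_closure_image_closedBall (𝕜₁ := ℝ)
      (f := (T : E →ₗ[ℝ] E)) hc 1
  set C : Set E := closure (⇑T '' closedBall (0:E) 1) with hCdef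
  set ε : ℝ := (1:ℝ)/4 with hεdef
  have hεpos : 0 < ε := by norm_num
  set δ : ℝ := ε / M₁ with hδdef
  have hδpos : 0 < δ := div_pos hεpos hM₁pos
  obtain ⟨t, htfin, htcover⟩ := totallyBounded_iff.mp hCcomp.totallyBounded δ hδpos
  have hev : ∀ᶠ n : ℕ in atTop, ∀ y ∈ t, ‖(T ^ n) y‖ < ε := by
    rw [Set.Finite.eventually_all htfin]
    intro y _
    exact (h0 y).eventually (gt_mem_nhds hεpos)
  obtain ⟨N, hN⟩ := hev.exists
  refine ⟨N + 1, lt_of_le_of_lt (ContinuousLinearMap.opNorm_le_of_unit_norm (by norm_num)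
    (fun x hx => ?_)) (by norm_num : (1:ℝ)/2 < 1)⟩
  have hTx : T x ∈ C := subset_closure ⟨x, by simp [hx], rfl⟩
  obtain ⟨y, hy, hxy⟩ := Set.mem_iUnion₂.mp (htcover hTx)
  have h1 : ‖(T ^ N) (T x - y)‖ ≤ M₁ * δ :=
    le_trans ((T ^ N).le_opNorm _)
      (mul_le_mul (hM₁ N) (le_of_lt (by simpa [dist_eq_norm] using hxy)) (norm_nonneg _)
        (le_of_lt hM₁pos))
  have hMδ : M₁ * δ = ε := by
    rw [hδdef, mul_div_assoc', mul_comm, mul_div_assoc, div_self hM₁pos.ne', mul_one]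
  have h2 : ‖(T ^ N) y‖ < ε := hN y hy
  have key : (T ^ (N + 1)) x = (T ^ N) (T x) := by
    rw [pow_succ]; rfl
  calc ‖(T ^ (N + 1)) x‖ = ‖(T ^ N) (T x - y) + (T ^ N) y‖ := by
        rw [key, ← map_add, sub_add_cancel]
      _ ≤ ‖(T ^ N) (T x - y)‖ + ‖(T ^ N) y‖ := norm_add_le _ _
      _ ≤ ε + ε := add_le_add (hMδ ▸ h1) (le_of_lt h2)
      _ = 1/2 := by norm_num

-- a two-sided-divisor-of-a-unit lemma
lemma isUnit_of_mul_eq_unit {R : Type*} [Ring R] {a b u : R} (hu : IsUnit u)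
    (h1 : a * b = u) (h2 : b * a = u) : IsUnit a := by
  obtain ⟨v, rfl⟩ := hu
  refine ⟨⟨a, b * ↑v⁻¹, ?_, ?_⟩, rfl⟩
  · rw [← mul_assoc, h1, v.mul_inv]
  · have hl : (↑v⁻¹ * b) * a = 1 := by rw [mul_assoc, h2, v.inv_mul]
    have : b * ↑v⁻¹ = ↑v⁻¹ * b := by
      calc b * ↑v⁻¹ = ((↑v⁻¹ * b) * a) * (b * ↑v⁻¹) := by rw [hl, one_mul]
        _ = (↑v⁻¹ * b) * ((a * b) * ↑v⁻¹) := by simp only [mul_assoc]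
        _ = (↑v⁻¹ * b) * 1 := by rw [h1, v.mul_inv]
        _ = ↑v⁻¹ * b := mul_one _
    rw [this, hl]


lemma main_aux {E : Type*} [NormedAddCommGroup E] [NormedSpace ℝ E] [CompleteSpace E]
    (φ : E →L[ℝ] ℝ) (L : E →L[ℝ] E)
    (hcomp : IsCompactOperator L)
    (hint : ∀ g : E, φ (L g) = φ g)
    (hmix : ∀ g : E, φ g = 0 →
      Tendsto (fun n : ℕ => ‖(L ^ n) g‖) atTop (nhds 0)) :
    (∀ g : E, φ g = 0 → ∃! h : E, φ h = 0 ∧ h - L h = g) ∧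
    (∃ M : ℝ, 0 ≤ M ∧ ∀ g h : E, φ g = 0 → φ h = 0 → h - L h = g →
      ‖h‖ ≤ M * ‖g‖) := by
  classical
  set K : Submodule ℝ E := LinearMap.ker (φ : E →ₗ[ℝ] ℝ) with hKdef
  have hmem : ∀ f : E, f ∈ K ↔ φ f = 0 := fun f => LinearMap.mem_ker
  have hKclosed : IsClosed (K : Set E) := ContinuousLinearMap.isClosed_ker φ
  haveI : CompleteSpace K := hKclosed.completeSpace_coe
  have hLmem : ∀ x : K, (L.comp K.subtypeL) x ∈ K := by
    intro x
    rw [hmem]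
    rw [show (L.comp K.subtypeL) x = L ↑x from rfl, hint]
    exact (hmem ↑x).1 x.2
  set T : K →L[ℝ] K := (L.comp K.subtypeL).codRestrict K hLmem with hTdef
  have hTcoe : ∀ x : K, ((T x : K) : E) = L ↑x := fun x => rfl
  have hTpow : ∀ (n : ℕ) (x : K), (((T ^ n) x : K) : E) = (L ^ n) ↑x := by
    intro n
    induction n with
    | zero => intro x; simp
    | succ n ih =>
      intro x
      rw [pow_succ', pow_succ', ContinuousLinearMap.mul_apply,
        ContinuousLinearMap.mul_apply, hTcoe, ih]
  have hcT : IsCompactOperator ⇑T :=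
    (hcomp.comp_clm K.subtypeL).codRestrict (fun x => hLmem x) hKclosed
  have h0T : ∀ x : K, Tendsto (fun n : ℕ => ‖(T ^ n) x‖) atTop (nhds 0) := by
    intro x
    have hx0 : φ ↑x = 0 := (hmem ↑x).1 x.2
    have : (fun n : ℕ => ‖(T ^ n) x‖) = fun n : ℕ => ‖(L ^ n) (↑x : E)‖ := by
      funext n
      rw [← hTpow n x]
      rfl
    rw [this]
    exact hmix ↑x hx0
  obtain ⟨N, hN⟩ := exists_pow_norm_lt T hcT h0T
  have hu : IsUnit ((1 : K →L[ℝ] K) - T ^ N) := by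
    simpa using (Units.oneSub (T ^ N) hN).isUnit
  set b : K →L[ℝ] K := ∑ i ∈ Finset.range N, T ^ i with hbdef
  have hab : ((1 : K →L[ℝ] K) - T) * b = 1 - T ^ N := mul_neg_geom_sum T N
  have hba : b * ((1 : K →L[ℝ] K) - T) = 1 - T ^ N := geom_sum_mul_neg T N
  obtain ⟨v, hv⟩ := isUnit_of_mul_eq_unit hu hab hba
  set S : K →L[ℝ] K := ↑v⁻¹ with hSdef
  have hS1 : ∀ x : K, S (x - T x) = x := by
    intro x
    have : (S * (1 - T)) x = x := by
      rw [← hv, hSdef, v.inv_mul, ContinuousLinearMap.one_apply]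
    simpa [ContinuousLinearMap.mul_apply, ContinuousLinearMap.sub_apply] using this
  have hS2 : ∀ x : K, S x - T (S x) = x := by
    intro x
    have : ((1 - T) * S) x = x := by
      rw [← hv, hSdef, v.mul_inv, ContinuousLinearMap.one_apply]
    simpa [ContinuousLinearMap.mul_apply, ContinuousLinearMap.sub_apply] using this
  constructor
  · intro g hg
    set gK : K := ⟨g, (hmem g).2 hg⟩ with hgK
    refine ⟨↑(S gK), ⟨(hmem _).1 (S gK).2, ?_⟩, ?_⟩
    · have := congrArg (Subtype.val) (hS2 gK)
      simpa [hTcoe] using this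
    · rintro h' ⟨hh'0, hh'e⟩
      set h'K : K := ⟨h', (hmem h').2 hh'0⟩ with hh'K
      have he : h'K - T h'K = gK := by
        apply Subtype.ext
        simpa [hTcoe] using hh'e
      have := congrArg S he
      rw [hS1 h'K] at this
      exact congrArg Subtype.val this
  · refine ⟨‖S‖, ContinuousLinearMap.opNorm_nonneg S, ?_⟩
    intro g h hg hh he
    set gK : K := ⟨g, (hmem g).2 hg⟩ with hgK
    set hK : K := ⟨h, (hmem h).2 hh⟩ with hhK
    have heK : hK - T hK = gK := by
      apply Subtype.ext
      simpa [hTcoe] using he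
    have hinv : hK = S gK := by
      have := congrArg S heK
      rwa [hS1 hK] at this
    calc ‖h‖ = ‖hK‖ := rfl
      _ = ‖S gK‖ := by rw [hinv]
      _ ≤ ‖S‖ * ‖gK‖ := S.le_opNorm gK
      _ = ‖S‖ * ‖g‖ := rfl

/-- For a compact, integral-preserving, mixing operator `L` on
`L²([0,1])`, the operator `Id − L` restricted to the zero-mean subspace `V` is a
bijection of `V` onto `V` with bounded inverse. -/
theorem resolvent_bijective_bounded_on_zero_mean
    (L : Lp ℝ 2 μ01 →L[ℝ] Lp ℝ 2 μ01)
    (hcomp : IsCompactOperator L)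
    (hint : ∀ g : Lp ℝ 2 μ01, ∫ x, (L g) x ∂μ01 = ∫ x, g x ∂μ01)
    (hmix : ∀ g : Lp ℝ 2 μ01, (∫ x, g x ∂μ01) = 0 →
      Filter.Tendsto (fun n : ℕ => ‖(L ^ n) g‖) Filter.atTop (nhds 0)) :
    (∀ g : Lp ℝ 2 μ01, (∫ x, g x ∂μ01) = 0 →
      ∃! h : Lp ℝ 2 μ01, (∫ x, h x ∂μ01) = 0 ∧ h - L h = g) ∧
    (∃ M : ℝ, 0 ≤ M ∧ ∀ g h : Lp ℝ 2 μ01,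
      (∫ x, g x ∂μ01) = 0 → (∫ x, h x ∂μ01) = 0 → h - L h = g →
        ‖h‖ ≤ M * ‖g‖) := by
  classical
  set oneL2 : Lp ℝ 2 μ01 := Lp.const 2 μ01 (1:ℝ) with honeL2
  set φ : Lp ℝ 2 μ01 →L[ℝ] ℝ := innerSL ℝ oneL2 with hφdef
  have hinner : ∀ g : Lp ℝ 2 μ01, φ g = ∫ x, g x ∂μ01 := by
    intro g
    have h1 : φ g = ∫ x, (oneL2 x) * (g x) ∂μ01 := by
      simp [hφdef, L2.inner_def, RCLike.inner_apply, mul_comm]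
    rw [h1]
    refine integral_congr_ae ?_
    filter_upwards [Lp.coeFn_const 2 μ01 (1:ℝ)] with x hx
    rw [honeL2, hx]
    simp
  obtain ⟨H1, H2⟩ := main_aux φ L hcomp
    (fun g => by rw [hinner, hinner, hint])
    (fun g hg => by rw [hinner] at hg; exact hmix g hg)
  constructor
  · intro g hg
    obtain ⟨h, ⟨h0, he⟩, huniq⟩ := H1 g (by rw [hinner]; exact hg)
    refine ⟨h, ⟨by rw [← hinner]; exact h0, he⟩, ?_⟩
    intro h' ⟨h'0, h'e⟩
    exact huniq h' ⟨by rw [hinner]; exact h'0, h'e⟩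
  · obtain ⟨M, hM0, hM⟩ := H2
    exact ⟨M, hM0, fun g h hg hh he =>
      hM g h (by rw [hinner]; exact hg) (by rw [hinner]; exact hh) he⟩
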